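/- Let g : ℝ^n → ℝ^m be three times continuously differentiable, M = g⁻¹(0) with dg_x surjective for all x ∈ M, and let u : [0,1] → ℝ^n be a smooth path such that for each t there is a unique closest point x(t) ∈ M to u(t), with Lagrange multiplier λ(t) defined by (dg_{x(t)})ᵀλ(t) = u(t) − x(t), and satisfying for all t: S(t) = ∅ or ‖u(t) − x(t)‖ < (1/|S(t)|) Σ_{i∈S(t)} ‖∇g_i(x(t))‖/‖d²g_i(x(t))‖, where S(t) = { i : ‖d²g_i(x(t))‖ ≠ 0 }. Let 0 = t₀ < t₁ < ⋯ < t_s = 1 be the partition whose existence is guaranteed for plain Newton tracking (each z(t_{j−1}) = (x(t_{j−1}),λ(t_{j−1})) lies in the region of quadratic convergence of Newton's method applied to G(·; u(t_j)) = 0). Then for each j, the point z(t_{j−1}) + Δz obtained from the Euler prediction Δz = −(∂G/∂z (z(t_{j−1}), u(t_{j−1})))⁻¹ (∂G/∂u (z(t_{j−1}), u(t_{j−1}))) (u(t_j) − u(t_{j−1})) also lies in the region of quadratic convergence of Newton's method applied to G(·; u(t_j)) = 0, so Newton's method started at z(t_{j−1}) + Δz converges to z(t_j) = (x(t_j), λ(t_j));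 hence the predictor–corrector scheme converges and outputs the correct critical point x(1). -/

import Mathlib

/-- The Lagrange multiplier map `G(z; w) = (g x, (dg_x)ᵀ λ − w + x)`, `z = (x, λ)`. -/
noncomputable def lagrangeG {n m : ℕ}
    (g : EuclideanSpace ℝ (Fin n) → EuclideanSpace ℝ (Fin m))
    (w : EuclideanSpace ℝ (Fin n))
    (z : EuclideanSpace ℝ (Fin n) × EuclideanSpace ℝ (Fin m)) :
    EuclideanSpace ℝ (Fin m) × EuclideanSpace ℝ (Fin n) :=
  (g z.1, ContinuousLinearMap.adjoint (fderiv ℝ g z.1) z.2 - w + z.1)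

section auxx
open Metric Set



section aux
variable {E F : Type*} [NormedAddCommGroup E] [NormedSpace ℝ E]
  [NormedAddCommGroup F] [NormedSpace ℝ F]

/-- Quadratic Taylor remainder bound on a ball. -/
lemma taylor_quad_bound (G : E → F) (hG : ContDiff ℝ 2 G) {c z z' : E} {r C : ℝ}
    (hz : z ∈ closedBall c r) (hz' : z' ∈ closedBall c r)
    (hbound : ∀ w ∈ closedBall c r, ‖fderiv ℝ (fderiv ℝ G) w‖ ≤ C) :
    ‖G z' - G z - fderiv ℝ G z (z' - z)‖ ≤ C / 2 * ‖z' - z‖ ^ 2 := by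
  have hC : 0 ≤ C := le_trans (norm_nonneg (fderiv ℝ (fderiv ℝ G) c)) (hbound c (mem_closedBall_self
    (le_trans dist_nonneg (mem_closedBall.1 hz))))
  have hG1 : ContDiff ℝ 1 (fderiv ℝ G) := hG.fderiv_right (by norm_num)
  have hGd : Differentiable ℝ G := hG.differentiable (by norm_num)
  -- Lipschitz bound for the derivative on the ball
  have hlip : ∀ w ∈ closedBall c r, ‖fderiv ℝ G w - fderiv ℝ G z‖ ≤ C * ‖w - z‖ := by
    intro w hw
    exact (convex_closedBall c r).norm_image_sub_le_of_norm_fderiv_le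
      (fun v _ => (hG1.differentiable (by norm_num)).differentiableAt) hbound hz hw
  set e := z' - z with he
  set v := fderiv ℝ G z e with hv
  set f : ℝ → F := fun s => G (z + s • e) - G z - s • v with hf
  have hmem : ∀ s ∈ Icc (0:ℝ) 1, z + s • e ∈ closedBall c r := by
    intro s hs
    have : z + s • e = (1 - s) • z + s • z' := by
      rw [he]; module
    rw [this]
    exact (convex_closedBall c r) hz hz' (by linarith [hs.1, hs.2]) hs.1 (by ring)
  have hderiv : ∀ s : ℝ, HasDerivAt f (fderiv ℝ G (z + s • e) e - v) s := by
    intro s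
    have h1 : HasDerivAt (fun s : ℝ => z + s • e) e s := by
      simpa using ((hasDerivAt_id s).smul_const e).const_add z
    have h2 : HasDerivAt (fun s : ℝ => G (z + s • e)) (fderiv ℝ G (z + s • e) e) s :=
      (hGd (z + s • e)).hasFDerivAt.comp_hasDerivAt s h1
    have := (h2.sub_const (G z)).sub ((hasDerivAt_id s).smul_const v)
    simp only [one_smul] at this
    exact this
  have key := image_norm_le_of_norm_deriv_right_le_deriv_boundary
    (f := f) (f' := fun s => fderiv ℝ G (z + s • e) e - v) (a := 0) (b := 1)
    (B := fun s => C * ‖e‖ ^ 2 / 2 * s ^ 2) (B' := fun s => C * ‖e‖ ^ 2 * s)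
    (fun s _ => (hderiv s).continuousAt.continuousWithinAt)
    (fun s _ => (hderiv s).hasDerivWithinAt)
    (by simp [hf])
    (fun s => by
      have := ((hasDerivAt_pow 2 s).const_mul (C * ‖e‖ ^ 2 / 2))
      exact this.congr_deriv (by ring))
    (by
      intro s hs
      have hsmem := hmem s ⟨hs.1, le_of_lt hs.2⟩
      have h1 : ‖fderiv ℝ G (z + s • e) e - v‖ ≤ ‖fderiv ℝ G (z + s • e) - fderiv ℝ G z‖ * ‖e‖ := by
        rw [hv]
        calc ‖fderiv ℝ G (z + s • e) e - fderiv ℝ G z e‖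
            = ‖(fderiv ℝ G (z + s • e) - fderiv ℝ G z) e‖ := by
              rw [ContinuousLinearMap.sub_apply]
          _ ≤ _ := ContinuousLinearMap.le_opNorm _ _
      have h2 := hlip _ hsmem
      have h3 : ‖z + s • e - z‖ = s * ‖e‖ := by
        rw [add_sub_cancel_left, norm_smul, Real.norm_eq_abs, abs_of_nonneg hs.1]
      calc ‖fderiv ℝ G (z + s • e) e - v‖ ≤ (C * (s * ‖e‖)) * ‖e‖ := by
            refine h1.trans ?_
            exact mul_le_mul_of_nonneg_right (h2.trans_eq (by rw [h3])) (norm_nonneg e)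
        _ = C * ‖e‖ ^ 2 * s := by ring)
  have := key (x := 1) ⟨zero_le_one, le_rfl⟩
  have hfe : f 1 = G z' - G z - fderiv ℝ G z e := by
    simp [hf, hv, he, map_sub]
  rw [hfe] at this
  calc ‖G z' - G z - fderiv ℝ G z e‖ ≤ C * ‖e‖ ^ 2 / 2 * 1 ^ 2 := this
    _ = C / 2 * ‖e‖ ^ 2 := by ring

end aux

section aux2
variable {E F : Type*} [NormedAddCommGroup E] [NormedSpace ℝ E]
  [NormedAddCommGroup F] [NormedSpace ℝ F]

/-- One Newton step at least squares the error (with constant `Mc`). -/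
lemma newton_step_bound (G : E → F) (hG : ContDiff ℝ 2 G) {zs z : E} {r Mc : ℝ}
    (hz : z ∈ closedBall zs r) (hGzs : G zs = 0)
    (D : E ≃L[ℝ] F) (hD : (D : E →L[ℝ] F) = fderiv ℝ G z)
    (hb : ∀ w ∈ closedBall zs r,
      (1/2) * ‖(D.symm : F →L[ℝ] E)‖ * ‖fderiv ℝ (fderiv ℝ G) w‖ ≤ Mc) :
    ‖z - D.symm (G z) - zs‖ ≤ Mc * ‖z - zs‖ ^ 2 := by
  have hr0 : 0 ≤ r := le_trans dist_nonneg hz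
  have hzsm : zs ∈ closedBall zs r := mem_closedBall_self hr0
  have hMc0 : 0 ≤ Mc := le_trans (by positivity) (hb zs hzsm)
  have hid : z - D.symm (G z) - zs = D.symm (G zs - G z - fderiv ℝ G z (zs - z)) := by
    have h1 : fderiv ℝ G z (zs - z) = D (zs - z) := by rw [← hD]; rfl
    rw [hGzs, h1]
    have h2 : D.symm ((0 : F) - G z - D (zs - z)) = -D.symm (G z) - (zs - z) := by
      simp [map_sub]
    rw [h2]; abel
  rw [hid]
  by_cases hns : ‖(D.symm : F →L[ℝ] E)‖ = 0
  · have h0 : (D.symm : F →L[ℝ] E) = 0 := norm_eq_zero.mp hns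
    have hv : D.symm (G zs - G z - fderiv ℝ G z (zs - z)) = 0 := by
      have : D.symm (G zs - G z - fderiv ℝ G z (zs - z))
          = (D.symm : F →L[ℝ] E) (G zs - G z - fderiv ℝ G z (zs - z)) := rfl
      rw [this, h0]; simp
    rw [hv]; simp; positivity
  · have hpos : 0 < ‖(D.symm : F →L[ℝ] E)‖ := lt_of_le_of_ne (norm_nonneg _) (Ne.symm hns)
    set C := 2 * Mc / ‖(D.symm : F →L[ℝ] E)‖ with hCdef
    have hCb : ∀ w ∈ closedBall zs r, ‖fderiv ℝ (fderiv ℝ G) w‖ ≤ C := by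
      intro w hw
      rw [hCdef, le_div_iff₀ hpos]
      have := hb w hw
      nlinarith [norm_nonneg (fderiv ℝ (fderiv ℝ G) w)]
    have htay := taylor_quad_bound G hG hz hzsm hCb
    calc ‖D.symm (G zs - G z - fderiv ℝ G z (zs - z))‖
        ≤ ‖(D.symm : F →L[ℝ] E)‖ * ‖G zs - G z - fderiv ℝ G z (zs - z)‖ :=
          ContinuousLinearMap.le_opNorm (D.symm : F →L[ℝ] E) _
      _ ≤ ‖(D.symm : F →L[ℝ] E)‖ * (C / 2 * ‖zs - z‖ ^ 2) :=
          mul_le_mul_of_nonneg_left htay (norm_nonneg _)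
      _ = Mc * ‖z - zs‖ ^ 2 := by
          rw [norm_sub_rev zs z, hCdef]; field_simp

end aux2

section lag
variable {n m : ℕ}

lemma adj_bilin (n m : ℕ) : IsBoundedBilinearMap ℝ
    (fun p : (EuclideanSpace ℝ (Fin n) →L[ℝ] EuclideanSpace ℝ (Fin m)) × EuclideanSpace ℝ (Fin m) =>
      ContinuousLinearMap.adjoint p.1 p.2) := by
  constructor
  · intro A B y; simp [map_add]
  · intro c A y; simp [map_smulₛₗ]
  · intro A y1 y2; simp
  · intro c A y; simp
  · refine ⟨1, one_pos, fun A y => ?_⟩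
    calc ‖ContinuousLinearMap.adjoint A y‖ ≤ ‖ContinuousLinearMap.adjoint A‖ * ‖y‖ :=
          ContinuousLinearMap.le_opNorm _ _
      _ = 1 * ‖A‖ * ‖y‖ := by rw [LinearIsometryEquiv.norm_map]; ring

set_option maxHeartbeats 1000000 in
lemma lagrangeG_contDiff (g : EuclideanSpace ℝ (Fin n) → EuclideanSpace ℝ (Fin m))
    (hg : ContDiff ℝ 3 g) (w : EuclideanSpace ℝ (Fin n)) :
    ContDiff ℝ 2 (lagrangeG g w) := by
  unfold lagrangeG
  have h1 : ContDiff ℝ 2 (fderiv ℝ g) := hg.fderiv_right (by norm_num)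
  have h3 : ContDiff ℝ 2 (fun z : EuclideanSpace ℝ (Fin n) × EuclideanSpace ℝ (Fin m) =>
      ((fderiv ℝ g z.1, z.2) :
        (EuclideanSpace ℝ (Fin n) →L[ℝ] EuclideanSpace ℝ (Fin m)) × EuclideanSpace ℝ (Fin m))) :=
    (h1.comp contDiff_fst).prodMk contDiff_snd
  have h2 : ContDiff ℝ 2 (fun z : EuclideanSpace ℝ (Fin n) × EuclideanSpace ℝ (Fin m) =>
      ContinuousLinearMap.adjoint (fderiv ℝ g z.1) z.2) := by
    have h4 := ContDiff.comp
      (g := fun p : (EuclideanSpace ℝ (Fin n) →L[ℝ] EuclideanSpace ℝ (Fin m)) ×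
          EuclideanSpace ℝ (Fin m) => ContinuousLinearMap.adjoint p.1 p.2)
      (f := fun z : EuclideanSpace ℝ (Fin n) × EuclideanSpace ℝ (Fin m) =>
        (fderiv ℝ g z.1, z.2))
      (adj_bilin n m).contDiff h3
    exact h4
  exact ((hg.of_le (by norm_num)).comp contDiff_fst).prodMk
    ((h2.sub contDiff_const).add contDiff_fst)

lemma fderiv_lagrangeG_param (g : EuclideanSpace ℝ (Fin n) → EuclideanSpace ℝ (Fin m))
    (w w' : EuclideanSpace ℝ (Fin n))
    (z : EuclideanSpace ℝ (Fin n) × EuclideanSpace ℝ (Fin m)) :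
    fderiv ℝ (lagrangeG g w') z = fderiv ℝ (lagrangeG g w) z := by
  have h : lagrangeG g w' = fun z => lagrangeG g w z +
      ((0 : EuclideanSpace ℝ (Fin m)), w - w') := by
    funext z
    unfold lagrangeG
    rw [Prod.mk_add_mk, Prod.mk.injEq]
    exact ⟨(add_zero _).symm, by abel⟩
  rw [h, fderiv_add_const]

lemma hasFDerivAt_lagrangeG_u (g : EuclideanSpace ℝ (Fin n) → EuclideanSpace ℝ (Fin m))
    (z0 : EuclideanSpace ℝ (Fin n) × EuclideanSpace ℝ (Fin m))
    (u0 : EuclideanSpace ℝ (Fin n)) :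
    HasFDerivAt (fun w => lagrangeG g w z0)
      (ContinuousLinearMap.prod
        (0 : EuclideanSpace ℝ (Fin n) →L[ℝ] EuclideanSpace ℝ (Fin m))
        ((0 : EuclideanSpace ℝ (Fin n) →L[ℝ] EuclideanSpace ℝ (Fin n)) -
          ContinuousLinearMap.id ℝ _)) u0 := by
  unfold lagrangeG
  exact (hasFDerivAt_const _ _).prodMk
    (((hasFDerivAt_const _ _).sub (hasFDerivAt_id _)).add_const _)

end lag

end auxx

open Finset in
/-- **Corollary 2.9** (convergence of the predictor–corrector scheme, Algorithm 2).
Under the hypotheses of Theorem 2.7, let `0 = t₀ < ⋯ < t_s = 1` be a partition such that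
each `z(t_{j−1}) = (x(t_{j−1}), λ(t_{j−1}))` lies in the region of quadratic convergence
of Newton's method for `G(·; u(t_j)) = 0` — i.e. within a radius-`r` tube of the solution
path on which the derivative `∂G/∂z` is invertible and
`(1/2)‖(∂G/∂z)⁻¹‖·‖∂²G/∂z²‖ ≤ Mc`, with `‖z(t_{j−1}) − z(t_j)‖ < r` and
`Mc·‖z(t_{j−1}) − z(t_j)‖ < 1`.  Then the Euler-predicted point `z(t_{j−1}) + Δz` also
lies in the region of quadratic convergence, and Newton's method started there converges
to `z(t_j)`; hence the scheme outputs the correct critical point `x(1)`. -/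
theorem euler_newton_tracking_converges
    (n m : ℕ) (g : EuclideanSpace ℝ (Fin n) → EuclideanSpace ℝ (Fin m))
    (hg : ContDiff ℝ 3 g)
    (hreg : ∀ x, g x = 0 → Function.Surjective (fderiv ℝ g x))
    (u : ℝ → EuclideanSpace ℝ (Fin n))
    (hu : ContDiffOn ℝ (⊤ : ℕ∞) u (Set.Icc 0 1))
    (x : ℝ → EuclideanSpace ℝ (Fin n)) (lam : ℝ → EuclideanSpace ℝ (Fin m))
    (hxM : ∀ t ∈ Set.Icc (0:ℝ) 1, g (x t) = 0)
    (hclosest : ∀ t ∈ Set.Icc (0:ℝ) 1, ∀ y, g y = 0 → ‖u t - x t‖ ≤ ‖u t - y‖)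
    (hunique : ∀ t ∈ Set.Icc (0:ℝ) 1, ∀ y, g y = 0 →
      ‖u t - x t‖ = ‖u t - y‖ → y = x t)
    (hlam : ∀ t ∈ Set.Icc (0:ℝ) 1,
      ContinuousLinearMap.adjoint (fderiv ℝ g (x t)) (lam t) = u t - x t)
    (hineq : ∀ t ∈ Set.Icc (0:ℝ) 1,
      (Finset.univ.filter
          (fun i : Fin m =>
            ‖fderiv ℝ (fun w => fderiv ℝ (fun y => g y i) w) (x t)‖ ≠ 0)) = ∅ ∨
      ‖u t - x t‖ <
        (1 / ((Finset.univ.filter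
            (fun i : Fin m =>
              ‖fderiv ℝ (fun w => fderiv ℝ (fun y => g y i) w) (x t)‖ ≠ 0)).card : ℝ)) *
          ∑ i ∈ Finset.univ.filter
              (fun i : Fin m =>
                ‖fderiv ℝ (fun w => fderiv ℝ (fun y => g y i) w) (x t)‖ ≠ 0),
            ‖gradient (fun y => g y i) (x t)‖ /
              ‖fderiv ℝ (fun w => fderiv ℝ (fun y => g y i) w) (x t)‖)
    -- the partition guaranteed by Theorem 2.7
    (s : ℕ) (hs : 0 < s) (t : ℕ → ℝ)
    (ht0 : t 0 = 0) (hts : t s = 1) (hmono : ∀ j < s, t j < t (j + 1))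
    -- the region of quadratic convergence: radius `r` and uniform constant `Mc`
    (r : ℝ) (hr : 0 < r) (Mc : ℝ) (hMc : 0 ≤ Mc)
    (htube : ∀ j, 1 ≤ j → j ≤ s →
      ∀ w0 ∈ Metric.closedBall ((x (t j), lam (t j)) :
          EuclideanSpace ℝ (Fin n) × EuclideanSpace ℝ (Fin m)) r,
        ∃ D : (EuclideanSpace ℝ (Fin n) × EuclideanSpace ℝ (Fin m)) ≃L[ℝ]
            (EuclideanSpace ℝ (Fin m) × EuclideanSpace ℝ (Fin n)),
          (D : (EuclideanSpace ℝ (Fin n) × EuclideanSpace ℝ (Fin m)) →L[ℝ]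
              (EuclideanSpace ℝ (Fin m) × EuclideanSpace ℝ (Fin n))) =
            fderiv ℝ (lagrangeG g (u (t j))) w0 ∧
          ∀ w1 ∈ Metric.closedBall ((x (t j), lam (t j)) :
              EuclideanSpace ℝ (Fin n) × EuclideanSpace ℝ (Fin m)) r,
            (1 / 2) * ‖(D.symm : (EuclideanSpace ℝ (Fin m) × EuclideanSpace ℝ (Fin n)) →L[ℝ]
                  (EuclideanSpace ℝ (Fin n) × EuclideanSpace ℝ (Fin m)))‖ *
                ‖fderiv ℝ (fun w => fderiv ℝ (lagrangeG g (u (t j))) w) w1‖ ≤ Mc)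
    -- each `z(t_{j−1})` lies in the region of quadratic convergence around `z(t_j)`
    (hstep : ∀ j, 1 ≤ j → j ≤ s →
      ‖((x (t (j - 1)), lam (t (j - 1))) :
          EuclideanSpace ℝ (Fin n) × EuclideanSpace ℝ (Fin m)) -
        (x (t j), lam (t j))‖ < r ∧
      Mc * ‖((x (t (j - 1)), lam (t (j - 1))) :
          EuclideanSpace ℝ (Fin n) × EuclideanSpace ℝ (Fin m)) -
        (x (t j), lam (t j))‖ < 1) :
    ∀ j, 1 ≤ j → j ≤ s →
      ∃ D0 : (EuclideanSpace ℝ (Fin n) × EuclideanSpace ℝ (Fin m)) ≃L[ℝ]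
          (EuclideanSpace ℝ (Fin m) × EuclideanSpace ℝ (Fin n)),
        (D0 : (EuclideanSpace ℝ (Fin n) × EuclideanSpace ℝ (Fin m)) →L[ℝ]
            (EuclideanSpace ℝ (Fin m) × EuclideanSpace ℝ (Fin n))) =
          fderiv ℝ (lagrangeG g (u (t (j - 1)))) (x (t (j - 1)), lam (t (j - 1))) ∧
        ∀ Δz : EuclideanSpace ℝ (Fin n) × EuclideanSpace ℝ (Fin m),
          Δz = -(D0.symm
              ((fderiv ℝ (fun w => lagrangeG g w (x (t (j - 1)), lam (t (j - 1))))
                  (u (t (j - 1)))) (u (t j) - u (t (j - 1))))) →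
          -- the Euler-predicted point lies in the region of quadratic convergence
          ((x (t (j - 1)), lam (t (j - 1))) + Δz ∈
            Metric.closedBall ((x (t j), lam (t j)) :
              EuclideanSpace ℝ (Fin n) × EuclideanSpace ℝ (Fin m)) r ∧
           Mc * ‖(x (t (j - 1)), lam (t (j - 1))) + Δz - (x (t j), lam (t j))‖ < 1) ∧
          -- and Newton's method started there converges to `z(t_j)`
          ∃ z : ℕ → EuclideanSpace ℝ (Fin n) × EuclideanSpace ℝ (Fin m),
            z 0 = (x (t (j - 1)), lam (t (j - 1))) + Δz ∧
            (∀ k, ∃ D : (EuclideanSpace ℝ (Fin n) × EuclideanSpace ℝ (Fin m)) ≃L[ℝ]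
                (EuclideanSpace ℝ (Fin m) × EuclideanSpace ℝ (Fin n)),
              (D : (EuclideanSpace ℝ (Fin n) × EuclideanSpace ℝ (Fin m)) →L[ℝ]
                  (EuclideanSpace ℝ (Fin m) × EuclideanSpace ℝ (Fin n))) =
                fderiv ℝ (lagrangeG g (u (t j))) (z k) ∧
              z (k + 1) = z k - D.symm (lagrangeG g (u (t j)) (z k))) ∧
            Filter.Tendsto z Filter.atTop (nhds (x (t j), lam (t j))) := by
  
  classical
  intro j hj1 hjs
  have hj'le : j - 1 ≤ s := le_trans (Nat.sub_le j 1) hjs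
  have hmono' : ∀ k, k ≤ s → ∀ i, i ≤ k → t i ≤ t k := by
    intro k
    induction k with
    | zero => intro _ i hi; rw [Nat.le_zero.mp hi]
    | succ k ih =>
      intro hk i hi
      rcases Nat.eq_or_lt_of_le hi with h | h
      · rw [h]
      · exact le_trans (ih (by omega) i (by omega)) (hmono k (by omega)).le
  have htmem : ∀ k, k ≤ s → t k ∈ Set.Icc (0:ℝ) 1 := by
    intro k hk
    constructor
    · rw [← ht0]; exact hmono' k hk 0 (Nat.zero_le _)
    · rw [← hts]; exact hmono' s le_rfl k hk
  obtain ⟨hlt, hq⟩ := hstep j hj1 hjs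
  set z0 : EuclideanSpace ℝ (Fin n) × EuclideanSpace ℝ (Fin m) :=
    (x (t (j - 1)), lam (t (j - 1))) with hz0def
  set z1 : EuclideanSpace ℝ (Fin n) × EuclideanSpace ℝ (Fin m) :=
    (x (t j), lam (t j)) with hz1def
  have hz0mem : z0 ∈ Metric.closedBall z1 r := by
    rw [Metric.mem_closedBall, dist_eq_norm]; exact hlt.le
  obtain ⟨D, hDeq, hDb⟩ := htube j hj1 hjs z0 hz0mem
  have hG2 : ContDiff ℝ 2 (lagrangeG g (u (t j))) := lagrangeG_contDiff g hg _
  have hGz1 : lagrangeG g (u (t j)) z1 = 0 := by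
    have h1 := hxM _ (htmem j hjs)
    have h2 := hlam _ (htmem j hjs)
    show (g (x (t j)), ContinuousLinearMap.adjoint (fderiv ℝ g (x (t j))) (lam (t j))
        - u (t j) + x (t j)) = 0
    rw [h1, h2, Prod.mk_eq_zero]
    exact ⟨rfl, by abel⟩
  have hGz0 : lagrangeG g (u (t j)) z0 = (0, u (t (j - 1)) - u (t j)) := by
    have h1 := hxM _ (htmem _ hj'le)
    have h2 := hlam _ (htmem _ hj'le)
    show (g (x (t (j - 1))), ContinuousLinearMap.adjoint (fderiv ℝ g (x (t (j - 1))))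
        (lam (t (j - 1))) - u (t j) + x (t (j - 1))) = _
    rw [h1, h2, Prod.mk.injEq]
    exact ⟨rfl, by abel⟩
  refine ⟨D, by rw [hDeq]; exact (fderiv_lagrangeG_param g (u (t j)) (u (t (j - 1))) z0).symm, ?_⟩
  intro Δz hΔz
  have hfdu := (hasFDerivAt_lagrangeG_u g z0 (u (t (j - 1)))).fderiv
  have happ : (fderiv ℝ (fun w => lagrangeG g w z0) (u (t (j - 1)))) (u (t j) - u (t (j - 1)))
      = ((0 : EuclideanSpace ℝ (Fin m)), u (t (j - 1)) - u (t j)) := by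
    rw [hfdu]
    simp [ContinuousLinearMap.sub_apply, neg_sub]
  have hΔz' : Δz = -(D.symm (lagrangeG g (u (t j)) z0)) := by
    rw [hΔz, happ, hGz0]
  have hnewton : z0 + Δz = z0 - D.symm (lagrangeG g (u (t j)) z0) := by
    rw [hΔz', sub_eq_add_neg]
  have hnb := newton_step_bound (lagrangeG g (u (t j))) hG2 hz0mem hGz1 D hDeq hDb
  set c := ‖z0 - z1‖ with hcdef
  have hc0 : (0:ℝ) ≤ c := norm_nonneg _
  set q := Mc * c with hqdef
  have hq0 : (0:ℝ) ≤ q := mul_nonneg hMc hc0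
  have hq1 : q < 1 := hq
  have he1 : ‖z0 + Δz - z1‖ ≤ q * c := by
    calc ‖z0 + Δz - z1‖ = ‖z0 - D.symm (lagrangeG g (u (t j)) z0) - z1‖ := by rw [hnewton]
      _ ≤ Mc * c ^ 2 := hnb
      _ = q * c := by rw [hqdef]; ring
  have hb0 : (0:ℝ) ≤ ‖z0 + Δz - z1‖ := norm_nonneg _
  have hqc_le_c : q * c ≤ c := mul_le_of_le_one_left hc0 hq1.le
  have hb0r : ‖z0 + Δz - z1‖ ≤ c := le_trans he1 hqc_le_c
  have hmem1 : z0 + Δz ∈ Metric.closedBall z1 r := by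
    rw [Metric.mem_closedBall, dist_eq_norm]
    exact le_of_lt (lt_of_le_of_lt hb0r hlt)
  have hMce1 : Mc * ‖z0 + Δz - z1‖ < 1 := by
    calc Mc * ‖z0 + Δz - z1‖ ≤ Mc * (q * c) := mul_le_mul_of_nonneg_left he1 hMc
      _ = q * q := by rw [hqdef]; ring
      _ ≤ q := mul_le_of_le_one_left hq0 hq1.le
      _ < 1 := hq1
  refine ⟨⟨hmem1, hMce1⟩, ?_⟩
  set step : EuclideanSpace ℝ (Fin n) × EuclideanSpace ℝ (Fin m) →
      EuclideanSpace ℝ (Fin n) × EuclideanSpace ℝ (Fin m) :=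
    fun w => if h : w ∈ Metric.closedBall z1 r then
      w - (Classical.choose (htube j hj1 hjs w h)).symm (lagrangeG g (u (t j)) w)
    else w with hstepdef
  have hinv : ∀ k, step^[k] (z0 + Δz) ∈ Metric.closedBall z1 r ∧
      ‖step^[k] (z0 + Δz) - z1‖ ≤ q ^ k * ‖z0 + Δz - z1‖ := by
    intro k
    induction k with
    | zero =>
      rw [Function.iterate_zero_apply, pow_zero, one_mul]
      exact ⟨hmem1, le_rfl⟩
    | succ k ih =>
      obtain ⟨hmemk, hbk⟩ := ih
      have hiter : step^[k + 1] (z0 + Δz) = step (step^[k] (z0 + Δz)) :=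
        Function.iterate_succ_apply' step k _
      have hspec := Classical.choose_spec (htube j hj1 hjs (step^[k] (z0 + Δz)) hmemk)
      have hstepk : step (step^[k] (z0 + Δz)) = step^[k] (z0 + Δz) -
          (Classical.choose (htube j hj1 hjs (step^[k] (z0 + Δz)) hmemk)).symm
            (lagrangeG g (u (t j)) (step^[k] (z0 + Δz))) := dif_pos hmemk
      have hnbk := newton_step_bound (lagrangeG g (u (t j))) hG2 hmemk hGz1 _ hspec.1 hspec.2
      have hqk1 : q ^ k ≤ 1 := pow_le_one₀ hq0 hq1.le
      have hak : ‖step^[k] (z0 + Δz) - z1‖ ≤ c := by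
        calc ‖step^[k] (z0 + Δz) - z1‖ ≤ q ^ k * ‖z0 + Δz - z1‖ := hbk
          _ ≤ 1 * ‖z0 + Δz - z1‖ := mul_le_mul_of_nonneg_right hqk1 hb0
          _ = ‖z0 + Δz - z1‖ := one_mul _
          _ ≤ c := hb0r
      have hkey : ‖step^[k + 1] (z0 + Δz) - z1‖ ≤ q ^ (k + 1) * ‖z0 + Δz - z1‖ := by
        rw [hiter, hstepk]
        calc ‖step^[k] (z0 + Δz) -
              (Classical.choose (htube j hj1 hjs (step^[k] (z0 + Δz)) hmemk)).symm
                (lagrangeG g (u (t j)) (step^[k] (z0 + Δz))) - z1‖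
            ≤ Mc * ‖step^[k] (z0 + Δz) - z1‖ ^ 2 := hnbk
          _ = (Mc * ‖step^[k] (z0 + Δz) - z1‖) * ‖step^[k] (z0 + Δz) - z1‖ := by ring
          _ ≤ q * ‖step^[k] (z0 + Δz) - z1‖ := by
              refine mul_le_mul_of_nonneg_right ?_ (norm_nonneg _)
              rw [hqdef]
              exact mul_le_mul_of_nonneg_left hak hMc
          _ ≤ q * (q ^ k * ‖z0 + Δz - z1‖) := mul_le_mul_of_nonneg_left hbk hq0
          _ = q ^ (k + 1) * ‖z0 + Δz - z1‖ := by ring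
      refine ⟨?_, hkey⟩
      rw [Metric.mem_closedBall, dist_eq_norm]
      calc ‖step^[k + 1] (z0 + Δz) - z1‖ ≤ q ^ (k + 1) * ‖z0 + Δz - z1‖ := hkey
        _ ≤ 1 * ‖z0 + Δz - z1‖ :=
            mul_le_mul_of_nonneg_right (pow_le_one₀ hq0 hq1.le) hb0
        _ = ‖z0 + Δz - z1‖ := one_mul _
        _ ≤ c := hb0r
        _ ≤ r := hlt.le
  refine ⟨fun k => step^[k] (z0 + Δz), rfl, ?_, ?_⟩
  · intro k
    refine ⟨Classical.choose (htube j hj1 hjs (step^[k] (z0 + Δz)) (hinv k).1),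
      (Classical.choose_spec (htube j hj1 hjs (step^[k] (z0 + Δz)) (hinv k).1)).1, ?_⟩
    show step^[k + 1] (z0 + Δz) = step^[k] (z0 + Δz) -
      (Classical.choose (htube j hj1 hjs (step^[k] (z0 + Δz)) (hinv k).1)).symm
        (lagrangeG g (u (t j)) (step^[k] (z0 + Δz)))
    rw [Function.iterate_succ_apply' step k]
    exact dif_pos (hinv k).1
  · have hdist : ∀ k, dist (step^[k] (z0 + Δz)) z1 ≤ ‖z0 + Δz - z1‖ * q ^ k := by
      intro k
      rw [dist_eq_norm]
      calc ‖step^[k] (z0 + Δz) - z1‖ ≤ q ^ k * ‖z0 + Δz - z1‖ := (hinv k).2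
        _ = ‖z0 + Δz - z1‖ * q ^ k := mul_comm _ _
    have hlim : Filter.Tendsto (fun k : ℕ => ‖z0 + Δz - z1‖ * q ^ k)
        Filter.atTop (nhds 0) := by
      have := (tendsto_pow_atTop_nhds_zero_of_lt_one hq0 hq1).const_mul ‖z0 + Δz - z1‖
      simpa using this
    exact tendsto_iff_dist_tendsto_zero.mpr
      (squeeze_zero (fun k => dist_nonneg) hdist hlim)
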